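/- Define F(a,y) = (4·sinh((1/2)·arccosh((1 - 2y + 2a² - 2a²y² + y²)/(2a²(1-y²))))·√(1-y²) + 2ya)/(π·√(1-y²)) for 0 < a ≤ 1/√2 and 1 - 2a² < y ≤ √(1-a²). Then F(a,y) ≤ max(F(a, √(1-a²)), F evaluated at the boundary y = 1-2a²); i.e., the maximum of y ↦ F(a,y) on the closed interval [1-2a², √(1-a²)] is attained at an endpoint. -/

import Mathlib

open Real

/-- The inverse hyperbolic cosine on [1,∞). -/
noncomputable def arcosh (x : ℝ) : ℝ := Real.log (x + Real.sqrt (x^2 - 1))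

/-- The general density function of hyp-hor packings in the hyperbolic plane,
where `a` parametrizes the Coxeter tiling and `y` is the position of the
tangency point. -/
noncomputable def F (a y : ℝ) : ℝ :=
  (4 * Real.sinh ((1/2) * _root_.arcosh
      ((1 - 2*y + 2*a^2 - 2*a^2*y^2 + y^2) / (2 * a^2 * (1 - y^2)))) * Real.sqrt (1 - y^2)
    + 2 * y * a) / (π * Real.sqrt (1 - y^2))

lemma cosh_arcosh' {x : ℝ} (hx : 1 ≤ x) : Real.cosh (_root_.arcosh x) = x := by
  have hs : Real.sqrt (x^2-1) ^ 2 = x^2 - 1 := Real.sq_sqrt (by nlinarith)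
  have hs0 : 0 ≤ Real.sqrt (x^2-1) := Real.sqrt_nonneg _
  have hu : (0:ℝ) < x + Real.sqrt (x^2-1) := by nlinarith
  have hinv : (x + Real.sqrt (x^2-1))⁻¹ = x - Real.sqrt (x^2-1) := by
    rw [inv_eq_iff_eq_inv, eq_comm, inv_eq_of_mul_eq_one_right]
    nlinarith
  rw [_root_.arcosh, Real.cosh_eq, Real.exp_log hu, Real.exp_neg, Real.exp_log hu, hinv]
  ring

lemma arcosh_nonneg' {x : ℝ} (hx : 1 ≤ x) : 0 ≤ _root_.arcosh x :=
  Real.log_nonneg (by nlinarith [Real.sqrt_nonneg (x^2-1)])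

lemma sinh_half_arcosh {x : ℝ} (hx : 1 ≤ x) :
    Real.sinh ((1/2) * _root_.arcosh x) = Real.sqrt ((x-1)/2) := by
  have h2 : Real.cosh (2 * ((1/2) * _root_.arcosh x)) = x := by
    rw [show 2 * ((1/2) * _root_.arcosh x) = _root_.arcosh x by ring, cosh_arcosh' hx]
  rw [Real.cosh_two_mul, Real.cosh_sq] at h2
  have hn : 0 ≤ Real.sinh ((1/2) * _root_.arcosh x) :=
    Real.sinh_nonneg_iff.2 (by have := arcosh_nonneg' hx; linarith)
  rw [show (x-1)/2 = Real.sinh ((1/2) * _root_.arcosh x)^2 by linarith, Real.sqrt_sq hn]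

lemma F_eq (a y : ℝ) (ha : 0 < a) (hy0 : 0 ≤ y) (hy1 : y < 1) :
    F a y = 2 * (1 - (1-a^2)*y) / (a * π * Real.sqrt (1 - y^2)) := by
  have h1y : 0 < 1 - y := by linarith
  have h1y' : 0 < 1 + y := by linarith
  have hyy : 0 < 1 - y^2 := by nlinarith
  have harg : (1 - 2*y + 2*a^2 - 2*a^2*y^2 + y^2) / (2 * a^2 * (1 - y^2))
      = 1 + (1-y)/(2*a^2*(1+y)) := by
    field_simp
    ring
  have harg1 : (1:ℝ) ≤ 1 + (1-y)/(2*a^2*(1+y)) := by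
    have : 0 ≤ (1-y)/(2*a^2*(1+y)) := by positivity
    linarith
  rw [F, harg, sinh_half_arcosh harg1]
  have hsimp : Real.sqrt ((1 + (1-y)/(2*a^2*(1+y)) - 1)/2) * Real.sqrt (1 - y^2)
      = (1-y)/(2*a) := by
    rw [← Real.sqrt_mul (by nlinarith [div_nonneg h1y.le (by positivity : (0:ℝ) ≤ 2*a^2*(1+y))])]
    rw [show ((1 + (1-y)/(2*a^2*(1+y)) - 1)/2) * (1 - y^2) = ((1-y)/(2*a))^2 by
      field_simp; ring]
    exact Real.sqrt_sq (by positivity)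
  rw [mul_assoc, hsimp]
  field_simp
  ring

set_option maxHeartbeats 1000000 in
lemma core (b r y : ℝ) (hb : 1/2 ≤ b) (hb1 : b < 1) (hr : r^2 = b) (hr0 : 0 ≤ r)
    (hy1 : 2*b-1 ≤ y) (hy2 : y ≤ r) :
    (1-b*y)/Real.sqrt (1-y^2) ≤
      max ((1-b*r)/Real.sqrt (1-r^2)) ((1-b*(2*b-1))/Real.sqrt (1-(2*b-1)^2)) := by
  have hr1 : r < 1 := by nlinarith
  have hl0 : 0 ≤ 2*b-1 := by linarith
  have hy0 : 0 ≤ y := le_trans hl0 hy1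
  have hyl1 : y < 1 := lt_of_le_of_lt hy2 hr1
  have hl1 : 2*b-1 < 1 := by nlinarith
  have hden_y : 0 < 1 - y^2 := by nlinarith
  have hden_r : 0 < 1 - r^2 := by nlinarith
  have hden_l : 0 < 1 - (2*b-1)^2 := by nlinarith
  have hnum_y : 0 ≤ 1 - b*y := by nlinarith
  have hnum_r : 0 ≤ 1 - b*r := by nlinarith
  have hnum_l : 0 ≤ 1 - b*(2*b-1) := by nlinarith
  have key : ∀ p q : ℝ, 0 ≤ p → p / Real.sqrt q = Real.sqrt (p^2/q) := by
    intro p q hp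
    rw [Real.sqrt_div (sq_nonneg p), Real.sqrt_sq hp]
  rw [key _ _ hnum_y, key _ _ hnum_r, key _ _ hnum_l]
  rcases le_total y b with hyb | hby
  · -- decreasing part: compare with left endpoint l = 2b-1
    apply le_max_of_le_right
    apply Real.sqrt_le_sqrt
    rw [div_le_div_iff₀ hden_y hden_l]
    have hB : 0 ≤ 2*b*(1+(2*b-1)*y) - (1+b^2)*((2*b-1)+y) := by
      nlinarith [mul_nonneg (sub_nonneg.2 hyb) (by nlinarith : (0:ℝ) ≤ 1 + b - 2*b^2),
        mul_nonneg (sub_nonneg.2 hy1) (by nlinarith : (0:ℝ) ≤ 1 - b^2)]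
    nlinarith [mul_nonneg (sub_nonneg.2 hy1) hB]
  · -- increasing part: compare with right endpoint r
    apply le_max_of_le_left
    apply Real.sqrt_le_sqrt
    rw [div_le_div_iff₀ hden_y hden_r]
    subst hr
    have hrpos : 0 < r := by nlinarith
    have hrb : 0 < r - r^2 := by nlinarith [mul_pos hrpos (show (0:ℝ) < 1 - r by linarith)]
    have hCr : 0 ≤ r*(1+(r^2)^2) - r^2*(1+r^2) := by
      have e : r*(1+(r^2)^2) - r^2*(1+r^2) = r*(1-r)^2*(1+r+r^2) := by ring
      rw [e]; positivity
    have hCb : 0 ≤ (r-r^2)*(1-(r^2)^2) := by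
      have e : (r-r^2)*(1-(r^2)^2) = (r*(1-r))*((1-r)*((1+r)*(1+r^2))) := by ring
      rw [e]
      have h1r : (0:ℝ) < 1 - r := by linarith
      positivity
    have hrbC : 0 ≤ (r-r^2)*((1+(r^2)^2)*(r+y) - 2*r^2*(1+r*y)) := by
      have hid : (r-r^2)*((1+(r^2)^2)*(r+y) - 2*r^2*(1+r*y))
          = (r-y)*((r-r^2)*(1-(r^2)^2)) + 2*((y-r^2)*(r*(1+(r^2)^2) - r^2*(1+r^2))) := by
        ring
      rw [hid]
      have h1 := mul_nonneg (sub_nonneg.2 hy2) hCb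
      have h2 := mul_nonneg (sub_nonneg.2 hby) hCr
      linarith
    have hC : 0 ≤ (1+(r^2)^2)*(r+y) - 2*r^2*(1+r*y) := by
      by_contra hc
      push_neg at hc
      nlinarith [mul_pos hrb (neg_pos.2 hc)]
    nlinarith [mul_nonneg (sub_nonneg.2 hy2) hC]

/-- On the interval `[1 - 2a², √(1-a²)]` the maximum of `y ↦ F a y` is attained
at an endpoint. -/
theorem density_max_at_endpoints (a : ℝ) (h0 : 0 < a) (h1 : a ≤ 1 / Real.sqrt 2)
    (y : ℝ) (hy1 : 1 - 2*a^2 < y) (hy2 : y ≤ Real.sqrt (1 - a^2)) :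
    F a y ≤ max (F a (Real.sqrt (1 - a^2))) (F a (1 - 2*a^2)) := by
  have ha2 : a^2 ≤ 1/2 := by
    have h2 : (1 / Real.sqrt 2)^2 = 1/2 := by
      rw [div_pow, one_pow, Real.sq_sqrt (by norm_num : (0:ℝ) ≤ 2)]
    calc a^2 ≤ (1 / Real.sqrt 2)^2 := by
          apply pow_le_pow_left₀ h0.le h1
      _ = 1/2 := h2
  have ha2' : 0 < a^2 := by positivity
  set r := Real.sqrt (1 - a^2) with hrdef
  have hr : r^2 = 1 - a^2 := Real.sq_sqrt (by linarith)
  have hr0 : 0 ≤ r := Real.sqrt_nonneg _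
  have hr1 : r < 1 := by nlinarith
  have hy0 : 0 ≤ y := by linarith
  have hyl1 : y < 1 := lt_of_le_of_lt hy2 hr1
  have hl0 : (0:ℝ) ≤ 1 - 2*a^2 := by linarith
  have hl1 : (1:ℝ) - 2*a^2 < 1 := by linarith
  rw [F_eq a y h0 hy0 hyl1, F_eq a r h0 hr0 hr1, F_eq a (1-2*a^2) h0 hl0 hl1]
  have hkey := core (1-a^2) r y (by linarith) (by linarith) hr hr0
    (by linarith) hy2
  rw [show 2*(1-a^2)-1 = 1-2*a^2 by ring] at hkey
  have hc : (0:ℝ) < 2 / (a * π) := by positivity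
  have e : ∀ t s : ℝ, 2*t/(a*π*s) = 2/(a*π) * (t/s) := fun t s => by ring
  rw [e, e, e]
  rcases le_max_iff.1 hkey with h | h
  · exact le_max_of_le_left (mul_le_mul_of_nonneg_left h hc.le)
  · exact le_max_of_le_right (mul_le_mul_of_nonneg_left h hc.le)
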